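/- arXiv:1803.06981 — 3 statements merged into one kernel-verified Lean document; each statement's English description precedes it below -/
import Mathlib

section
/- Let w be a weight on ℝ, k ∈ ℤ, and let u = w_k be the function equal on each dyadic interval I of length 2^{-k} to the average of w over I, i.e. u = Σ_{I ∈ 𝒫_k} ⟨w⟩_I χ_I. Then for every bounded interval J with |J| > 2^{-k}, one has ⟨u⟩_J ≤ 3⟨w⟩_{J*}, where J* is the union of partition intervals of 𝒫_k intersecting J. -/
open MeasureTheory

/-- The dyadic interval of generation `k` and index `j`: `[j·2^{-k}, (j+1)·2^{-k})`. -/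
def dyadicInterval (k : ℤ) (j : ℤ) : Set ℝ :=
  Set.Ico ((j : ℝ) * (2 : ℝ) ^ (-k)) (((j : ℝ) + 1) * (2 : ℝ) ^ (-k))

/-- `J*`: the union of the dyadic intervals of generation `k` that intersect `J`. -/
def dyadicEnvelope (k : ℤ) (J : Set ℝ) : Set ℝ :=
  ⋃ (j : ℤ) (_ : (dyadicInterval k j ∩ J).Nonempty), dyadicInterval k j

/-- The averaging of `w` at scale `2^{-k}`: `u = Σ_{I∈𝒫_k} ⟨w⟩_I χ_I`, i.e. at `x` the value
is the average of `w` over the dyadic interval of generation `k` containing `x`. -/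
noncomputable def dyadicAvg (w : ℝ → ℝ) (k : ℤ) (x : ℝ) : ℝ :=
  ((2 : ℝ) ^ (-k))⁻¹ *
    ∫ t in dyadicInterval k ⌊x / (2 : ℝ) ^ (-k)⌋, w t

lemma dyadic_pos (k : ℤ) : (0:ℝ) < (2 : ℝ) ^ (-k) := zpow_pos (by norm_num) _

lemma mem_dyadicInterval_iff_floor (k j : ℤ) (x : ℝ) :
    x ∈ dyadicInterval k j ↔ ⌊x / (2 : ℝ) ^ (-k)⌋ = j := by
  have hδ := dyadic_pos k
  simp only [dyadicInterval, Set.mem_Ico, Int.floor_eq_iff]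
  rw [le_div_iff₀ hδ, div_lt_iff₀ hδ]

lemma measurableSet_dyadicInterval (k j : ℤ) : MeasurableSet (dyadicInterval k j) :=
  measurableSet_Ico

lemma volume_dyadicInterval (k j : ℤ) :
    volume (dyadicInterval k j) = ENNReal.ofReal ((2:ℝ) ^ (-k)) := by
  rw [dyadicInterval, Real.volume_Ico]
  ring_nf

lemma dyadicAvg_eq_on (w : ℝ → ℝ) (k j : ℤ) {x : ℝ} (hx : x ∈ dyadicInterval k j) :
    dyadicAvg w k x = ((2:ℝ) ^ (-k))⁻¹ * ∫ t in dyadicInterval k j, w t := by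
  rw [dyadicAvg, (mem_dyadicInterval_iff_floor k j x).1 hx]

lemma dyadicAvg_nonneg (w : ℝ → ℝ) (hw : ∀ x, 0 ≤ w x) (k : ℤ) (x : ℝ) :
    0 ≤ dyadicAvg w k x := by
  refine mul_nonneg (inv_nonneg.2 (dyadic_pos k).le) ?_
  exact setIntegral_nonneg (measurableSet_dyadicInterval _ _) fun t _ => hw t

set_option maxHeartbeats 1000000 in
/-- for `w` a weight, `u = Σ_{I∈𝒫_k} ⟨w⟩_I χ_I`, and a bounded interval `J`
with `|J| > 2^{-k}`, one has `⟨u⟩_J ≤ 3⟨w⟩_{J*}`. -/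
theorem avg_dyadicAvg_le_three_avg_envelope
    (w : ℝ → ℝ) (hw_nonneg : ∀ x, 0 ≤ w x) (hw_loc : LocallyIntegrable w volume)
    (k : ℤ) (a b : ℝ) (hJ : (2 : ℝ) ^ (-k) < b - a) :
    (b - a)⁻¹ * ∫ x in Set.Ioc a b, dyadicAvg w k x ≤
      3 * (((volume (dyadicEnvelope k (Set.Ioc a b))).toReal)⁻¹ *
        ∫ x in dyadicEnvelope k (Set.Ioc a b), w x) := by
  set δ : ℝ := (2:ℝ) ^ (-k) with hδdef
  have hδ : 0 < δ := dyadic_pos k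
  have hab : a < b := by linarith
  set m : ℤ := ⌊a / δ⌋ with hm
  set n : ℤ := ⌊b / δ⌋ with hn
  have hmδ : a - δ < (m:ℝ) * δ := by
    have := Int.lt_floor_add_one (a / δ)
    nlinarith [(div_lt_iff₀ hδ).1 this]
  have hmδ' : (m:ℝ) * δ ≤ a := by
    calc (m:ℝ) * δ ≤ (a / δ) * δ := by nlinarith [Int.floor_le (a / δ)]
    _ = a := by field_simp
  have hnδ : (n:ℝ) * δ ≤ b := by
    calc (n:ℝ) * δ ≤ (b / δ) * δ := by nlinarith [Int.floor_le (b / δ)]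
    _ = b := by field_simp
  have hbn : b < ((n:ℝ) + 1) * δ := by
    have := Int.lt_floor_add_one (b / δ)
    nlinarith [(div_lt_iff₀ hδ).1 this]
  have hmn : m < n := by
    have h2 : ((m + 1 : ℤ) : ℝ) ≤ b / δ := by
      rw [le_div_iff₀ hδ]; push_cast; nlinarith
    have := Int.le_floor.2 h2
    omega
  -- intersection characterization
  have hinter : ∀ j : ℤ, (dyadicInterval k j ∩ Set.Ioc a b).Nonempty ↔ m ≤ j ∧ j ≤ n := by
    intro j
    constructor
    · rintro ⟨y, hy1, hy2⟩
      rw [dyadicInterval, Set.mem_Ico] at hy1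
      rw [Set.mem_Ioc] at hy2
      constructor
      · have h1 : a / δ < ((j + 1 : ℤ) : ℝ) := by
          rw [div_lt_iff₀ hδ]; push_cast; nlinarith
        have := Int.floor_lt.2 h1
        omega
      · exact Int.le_floor.2 (by rw [le_div_iff₀ hδ]; nlinarith)
    · rintro ⟨h1, h2⟩
      have hjm : (m:ℝ) ≤ j := by exact_mod_cast h1
      have hjn : (j:ℝ) ≤ n := by exact_mod_cast h2
      by_cases hja : a < (j:ℝ) * δ
      · refine ⟨(j:ℝ) * δ, ?_, ?_⟩
        · rw [dyadicInterval, Set.mem_Ico]; constructor <;> nlinarith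
        · rw [Set.mem_Ioc]; exact ⟨hja, by nlinarith⟩
      · push_neg at hja
        have hlt : a < ((j:ℝ) + 1) * δ := by nlinarith
        refine ⟨min b ((a + ((j:ℝ) + 1) * δ) / 2), ?_, ?_⟩
        · rw [dyadicInterval, Set.mem_Ico]
          constructor
          · rcases min_cases b ((a + ((j:ℝ)+1) * δ) / 2) with ⟨h, _⟩ | ⟨h, _⟩ <;>
              rw [h] <;> nlinarith
          · rcases min_cases b ((a + ((j:ℝ)+1) * δ) / 2) with ⟨h, hle⟩ | ⟨h, hle⟩ <;>
              rw [h] <;> nlinarith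
        · rw [Set.mem_Ioc]
          refine ⟨?_, min_le_left _ _⟩
          rcases min_cases b ((a + ((j:ℝ)+1) * δ) / 2) with ⟨h, _⟩ | ⟨h, _⟩ <;>
            rw [h] <;> nlinarith
  -- envelope is an interval
  have henv : dyadicEnvelope k (Set.Ioc a b) = Set.Ico ((m:ℝ) * δ) (((n:ℝ) + 1) * δ) := by
    ext x
    simp only [dyadicEnvelope, Set.mem_iUnion]
    constructor
    · rintro ⟨j, hj, hx⟩
      rw [hinter] at hj
      rw [dyadicInterval, Set.mem_Ico] at hx
      rw [Set.mem_Ico]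
      have h1 : ((m:ℝ)) ≤ j := by exact_mod_cast hj.1
      have h2 : ((j:ℝ)) ≤ n := by exact_mod_cast hj.2
      constructor <;> nlinarith
    · intro hx
      rw [Set.mem_Ico] at hx
      refine ⟨⌊x / δ⌋, ?_, (mem_dyadicInterval_iff_floor k _ x).2 rfl⟩
      rw [hinter]
      constructor
      · exact Int.le_floor.2 (by rw [le_div_iff₀ hδ]; exact hx.1)
      · have h1 : x / δ < ((n + 1 : ℤ) : ℝ) := by
          rw [div_lt_iff₀ hδ]; push_cast; nlinarith [hx.2]
        have := Int.floor_lt.2 h1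
        omega
  -- integrability of w
  have hwIco : ∀ c d : ℝ, IntegrableOn w (Set.Ico c d) := fun c d =>
    (hw_loc.integrableOn_isCompact isCompact_Icc).mono_set Set.Ico_subset_Icc_self
  -- integral of u over a dyadic interval equals that of w
  have hIj : ∀ j : ℤ, ∫ x in dyadicInterval k j, dyadicAvg w k x
      = ∫ x in dyadicInterval k j, w x := by
    intro j
    rw [setIntegral_congr_fun (measurableSet_dyadicInterval k j)
        (fun x hx => dyadicAvg_eq_on w k j hx), setIntegral_const,
      measureReal_def, volume_dyadicInterval, ENNReal.toReal_ofReal hδ.le, smul_eq_mul, ← mul_assoc,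
      mul_inv_cancel₀ hδ.ne', one_mul]
  -- integrability of u on dyadic intervals
  have huIntj : ∀ j : ℤ, IntegrableOn (dyadicAvg w k) (dyadicInterval k j) := by
    intro j
    refine (IntegrableOn.congr_fun ?_ (fun x hx => (dyadicAvg_eq_on w k j hx).symm)
      (measurableSet_dyadicInterval k j))
    refine integrableOn_const ?_ enorm_ne_top
    rw [volume_dyadicInterval]
    exact ENNReal.ofReal_ne_top
  -- induction: integral over the union of dyadic intervals
  have key : ∀ p : ℤ, m ≤ p →
      IntegrableOn (dyadicAvg w k) (Set.Ico ((m:ℝ) * δ) (((p:ℝ) + 1) * δ)) ∧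
      ∫ x in Set.Ico ((m:ℝ) * δ) (((p:ℝ) + 1) * δ), dyadicAvg w k x
        = ∫ x in Set.Ico ((m:ℝ) * δ) (((p:ℝ) + 1) * δ), w x := by
    refine Int.le_induction ?_ ?_
    · have hset : Set.Ico ((m:ℝ) * δ) (((m:ℝ) + 1) * δ) = dyadicInterval k m := rfl
      rw [hset]
      exact ⟨huIntj m, hIj m⟩
    · intro p hp ih
      have hcast : ((p + 1 : ℤ) : ℝ) = (p:ℝ) + 1 := by push_cast; ring
      have hsplit : Set.Ico ((m:ℝ) * δ) ((((p+1:ℤ):ℝ) + 1) * δ)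
          = Set.Ico ((m:ℝ) * δ) (((p:ℝ) + 1) * δ) ∪ dyadicInterval k (p+1) := by
        rw [dyadicInterval, hcast, Set.Ico_union_Ico_eq_Ico]
        · have : (m:ℝ) ≤ (p:ℝ) + 1 := by exact_mod_cast le_trans hp (by omega)
          nlinarith
        · nlinarith
      have hdisj : Disjoint (Set.Ico ((m:ℝ) * δ) (((p:ℝ) + 1) * δ)) (dyadicInterval k (p+1)) := by
        rw [dyadicInterval, hcast]
        exact Set.Ico_disjoint_Ico_same
      constructor
      · rw [hsplit]; exact ih.1.union (huIntj (p+1))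
      · rw [hsplit,
          setIntegral_union hdisj (measurableSet_dyadicInterval k (p+1)) ih.1 (huIntj (p+1)),
          setIntegral_union hdisj (measurableSet_dyadicInterval k (p+1)) (hwIco _ _)
            (hwIco _ _),
          ih.2, hIj (p+1)]
  -- J ⊆ J*
  have hsub : Set.Ioc a b ⊆ Set.Ico ((m:ℝ) * δ) (((n:ℝ) + 1) * δ) := by
    intro x hx
    rw [Set.mem_Ioc] at hx
    rw [Set.mem_Ico]
    constructor <;> nlinarith [hx.1, hx.2]
  have h1 : ∫ x in Set.Ioc a b, dyadicAvg w k x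
      ≤ ∫ x in Set.Ico ((m:ℝ) * δ) (((n:ℝ) + 1) * δ), dyadicAvg w k x := by
    refine setIntegral_mono_set (key n hmn.le).1 ?_ (HasSubset.Subset.eventuallyLE hsub)
    exact Filter.Eventually.of_forall fun x => dyadicAvg_nonneg w hw_nonneg k x
  rw [henv]
  set V : ℝ := ((n:ℝ) + 1) * δ - (m:ℝ) * δ with hV
  have hVpos : 0 < V := by
    have : (m:ℝ) ≤ n := by exact_mod_cast hmn.le
    rw [hV]; nlinarith
  have hvol : (volume (Set.Ico ((m:ℝ) * δ) (((n:ℝ) + 1) * δ))).toReal = V := by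
    rw [Real.volume_Ico, ENNReal.toReal_ofReal hVpos.le]
  have hA : 0 ≤ ∫ x in Set.Ico ((m:ℝ) * δ) (((n:ℝ) + 1) * δ), w x :=
    setIntegral_nonneg measurableSet_Ico fun x _ => hw_nonneg x
  have hV3 : V ≤ 3 * (b - a) := by rw [hV]; nlinarith
  have hinv : (b - a)⁻¹ ≤ 3 * V⁻¹ := by
    have h3 : (0:ℝ) < V / 3 := by linarith
    have h4 : V / 3 ≤ b - a := by linarith
    calc (b - a)⁻¹ ≤ (V / 3)⁻¹ := inv_anti₀ h3 h4
    _ = 3 * V⁻¹ := by rw [inv_div]; ring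
  calc (b - a)⁻¹ * ∫ x in Set.Ioc a b, dyadicAvg w k x
      ≤ (b - a)⁻¹ * ∫ x in Set.Ico ((m:ℝ) * δ) (((n:ℝ) + 1) * δ), dyadicAvg w k x :=
        mul_le_mul_of_nonneg_left h1 (inv_nonneg.2 (by linarith))
    _ = (b - a)⁻¹ * ∫ x in Set.Ico ((m:ℝ) * δ) (((n:ℝ) + 1) * δ), w x := by rw [(key n hmn.le).2]
    _ ≤ (3 * V⁻¹) * ∫ x in Set.Ico ((m:ℝ) * δ) (((n:ℝ) + 1) * δ), w x :=
        mul_le_mul_of_nonneg_right hinv hA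
    _ = 3 * ((volume (Set.Ico ((m:ℝ) * δ) (((n:ℝ) + 1) * δ))).toReal⁻¹ *
          ∫ x in Set.Ico ((m:ℝ) * δ) (((n:ℝ) + 1) * δ), w x) := by rw [hvol, mul_assoc]
end

section
/- Let w be a weight on ℝ with w > 0 a.e., k ∈ ℤ, and u = Σ_{I∈𝒫_k} ⟨w⟩_I χ_I the dyadic averaging of w at scale 2^{-k}. Then for every bounded interval J, ⟨u^{-1}⟩_J ≤ (1/|J|) Σ_{I ∈ 𝒫_k, I∩J ≠ ∅} (|I∩J|/|I|) ∫_I w^{-1}. In particular ⟨u^{-1}⟩_J ≤ 3⟨w^{-1}⟩_{J*} when |J| > 2^{-k}. -/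
open MeasureTheory

lemma scale_pos (k : ℤ) : (0:ℝ) < (2:ℝ)^(-k) := zpow_pos (by norm_num) _

lemma mem_dyadicInterval_iff {k j : ℤ} {x : ℝ} :
    x ∈ dyadicInterval k j ↔ ⌊x / (2:ℝ)^(-k)⌋ = j := by
  have hh := scale_pos k
  simp only [dyadicInterval, Set.mem_Ico]
  constructor
  · rintro ⟨h1, h2⟩
    rw [Int.floor_eq_iff]
    constructor
    · rw [le_div_iff₀ hh]; linarith
    · rw [div_lt_iff₀ hh]; linarith
  · intro hfl
    have h1 : (j:ℝ) ≤ x / (2:ℝ)^(-k) := by rw [← hfl]; exact Int.floor_le _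
    have h2 : x / (2:ℝ)^(-k) < j + 1 := by rw [← hfl]; exact Int.lt_floor_add_one _
    rw [le_div_iff₀ hh] at h1
    rw [div_lt_iff₀ hh] at h2
    exact ⟨by linarith, by nlinarith⟩

lemma dyadic_disj {k : ℤ} : Pairwise (Function.onFun Disjoint (dyadicInterval k)) := by
  intro i j hij
  simp only [Function.onFun]
  rw [Set.disjoint_left]
  intro x hxi hxj
  exact hij (mem_dyadicInterval_iff.1 hxi ▸ mem_dyadicInterval_iff.1 hxj ▸ rfl)

lemma dyadic_meas {k j : ℤ} : MeasurableSet (dyadicInterval k j) := measurableSet_Ico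

lemma dyadic_vol {k j : ℤ} : volume (dyadicInterval k j) = ENNReal.ofReal ((2:ℝ)^(-k)) := by
  rw [dyadicInterval, Real.volume_Ico]; congr 1; ring

lemma dyadic_integrableOn {k j : ℤ} {f : ℝ → ℝ} (hf : LocallyIntegrable f volume) :
    IntegrableOn f (dyadicInterval k j) volume :=
  (hf.integrableOn_isCompact isCompact_Icc).mono_set Set.Ico_subset_Icc_self

lemma dyadic_int_pos {k j : ℤ} {w : ℝ → ℝ} (hw_pos : ∀ x, 0 < w x)
    (hw : IntegrableOn w (dyadicInterval k j) volume) :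
    0 < ∫ t in dyadicInterval k j, w t := by
  rw [setIntegral_pos_iff_support_of_nonneg_ae
    (Filter.Eventually.of_forall fun x => (hw_pos x).le) hw]
  have hsupp : Function.support w = Set.univ := by
    ext x; simp [Function.support, (hw_pos x).ne']
  rw [hsupp, Set.univ_inter, dyadic_vol]
  exact ENNReal.ofReal_pos.2 (scale_pos k)

lemma cs_bound {k j : ℤ} {w : ℝ → ℝ} (hw_pos : ∀ x, 0 < w x)
    (hw : IntegrableOn w (dyadicInterval k j) volume)
    (hwi : IntegrableOn (fun x => (w x)⁻¹) (dyadicInterval k j) volume) :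
    ((2:ℝ)^(-k))^2 ≤ (∫ t in dyadicInterval k j, w t) * (∫ t in dyadicInterval k j, (w t)⁻¹) := by
  set h : ℝ := (2:ℝ)^(-k) with hhdef
  have hh : 0 < h := scale_pos k
  set I := dyadicInterval k j with hI
  set A : ℝ := ∫ t in I, w t with hA
  set B : ℝ := ∫ t in I, (w t)⁻¹ with hB
  have hApos : 0 < A := dyadic_int_pos hw_pos hw
  set α : ℝ := h / A with hα
  have hαpos : 0 < α := div_pos hh hApos
  have hpt : ∀ x ∈ I, (2:ℝ) ≤ α * w x + α⁻¹ * (w x)⁻¹ := by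
    intro x _
    have hwx := hw_pos x
    have hs : 0 < α * w x := mul_pos hαpos hwx
    have hsc : (α * w x) * (α * w x)⁻¹ = 1 := mul_inv_cancel₀ hs.ne'
    have heq : α⁻¹ * (w x)⁻¹ = (α * w x)⁻¹ := (mul_inv α (w x)).symm
    rw [heq]
    nlinarith [sq_nonneg (α * w x - 1), hs, hsc]
  have hint : 2 * h ≤ α * A + α⁻¹ * B := by
    have h1 : (2:ℝ) * h = ∫ _ in I, (2:ℝ) := by
      rw [setIntegral_const, measureReal_def, hI, dyadic_vol, ENNReal.toReal_ofReal hh.le, smul_eq_mul]; ring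
    have h2 : ∫ x in I, (α * w x + α⁻¹ * (w x)⁻¹)
        = α * A + α⁻¹ * B := by
      rw [integral_add (hw.const_mul α) (hwi.const_mul α⁻¹), integral_const_mul, integral_const_mul]
    rw [h1, ← h2]
    exact setIntegral_mono_on
      (integrableOn_const (by rw [hI, dyadic_vol]; exact ENNReal.ofReal_ne_top))
      ((hw.const_mul α).add (hwi.const_mul α⁻¹)) measurableSet_Ico hpt
  have hαA : α * A = h := div_mul_cancel₀ h hApos.ne'
  have hαinv : α⁻¹ = A / h := by rw [hα, inv_div]
  rw [hαA, hαinv] at hint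
  have h2 : h ≤ (A / h) * B := by linarith
  have h3 := mul_le_mul_of_nonneg_right h2 hh.le
  calc h^2 = h * h := sq h
    _ ≤ (A / h) * B * h := h3
    _ = A * B := by field_simp

lemma inv_avg_le {k j : ℤ} {w : ℝ → ℝ} (hw_pos : ∀ x, 0 < w x)
    (hw : IntegrableOn w (dyadicInterval k j) volume)
    (hwi : IntegrableOn (fun x => (w x)⁻¹) (dyadicInterval k j) volume) :
    (((2:ℝ)^(-k))⁻¹ * ∫ t in dyadicInterval k j, w t)⁻¹
      ≤ ((2:ℝ)^(-k))⁻¹ * ∫ t in dyadicInterval k j, (w t)⁻¹ := by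
  have hh := scale_pos k
  have hApos := dyadic_int_pos hw_pos hw
  have hcs := cs_bound hw_pos hw hwi
  set h : ℝ := (2:ℝ)^(-k)
  set A : ℝ := ∫ t in dyadicInterval k j, w t
  set B : ℝ := ∫ t in dyadicInterval k j, (w t)⁻¹
  rw [mul_inv, inv_inv]
  nlinarith [mul_inv_cancel₀ hApos.ne', mul_inv_cancel₀ hh.ne', mul_pos hApos hh,
    inv_pos.2 hApos, inv_pos.2 hh, mul_pos (inv_pos.2 hApos) (inv_pos.2 hh)]

/-- for a weight `w > 0` and `u = Σ_{I∈𝒫_k} ⟨w⟩_I χ_I`, for every bounded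
interval `J`:
`⟨u⁻¹⟩_J ≤ (1/|J|) Σ_{I∈𝒫_k, I∩J≠∅} (|I∩J|/|I|) ∫_I w⁻¹`, and in particular
`⟨u⁻¹⟩_J ≤ 3⟨w⁻¹⟩_{J*}` when `|J| > 2^{-k}`. -/
theorem avg_inv_dyadicAvg_le
    (w : ℝ → ℝ) (hw_pos : ∀ x, 0 < w x) (hw_loc : LocallyIntegrable w volume)
    (hwinv_loc : LocallyIntegrable (fun x => (w x)⁻¹) volume)
    (k : ℤ) (a b : ℝ) (hab : a < b) :
    ((b - a)⁻¹ * ∫ x in Set.Ioc a b, (dyadicAvg w k x)⁻¹ ≤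
      (b - a)⁻¹ * ∑' j : ℤ,
        ((volume (dyadicInterval k j ∩ Set.Ioc a b)).toReal / (2 : ℝ) ^ (-k)) *
          ∫ t in dyadicInterval k j, (w t)⁻¹) ∧
    ((2 : ℝ) ^ (-k) < b - a →
      (b - a)⁻¹ * ∫ x in Set.Ioc a b, (dyadicAvg w k x)⁻¹ ≤
        3 * (((volume (dyadicEnvelope k (Set.Ioc a b))).toReal)⁻¹ *
          ∫ x in dyadicEnvelope k (Set.Ioc a b), (w x)⁻¹)) := by
  classical
  have hh : (0:ℝ) < (2:ℝ)^(-k) := scale_pos k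
  set h : ℝ := (2:ℝ)^(-k) with hhdef
  set J : Set ℝ := Set.Ioc a b with hJdef
  have hba : (0:ℝ) < b - a := by linarith
  set m : ℤ := ⌊a / h⌋ with hmdef
  set n : ℤ := ⌊b / h⌋ with hndef
  set S : Finset ℤ :=
    (Finset.Icc m n).filter (fun j => (dyadicInterval k j ∩ J).Nonempty) with hSdef
  -- membership facts
  have hIccOf : ∀ j : ℤ, (dyadicInterval k j ∩ J).Nonempty → j ∈ Finset.Icc m n := by
    rintro j ⟨x, hxI, hxJ⟩
    obtain ⟨hx1, hx2⟩ := hxI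
    obtain ⟨hxa, hxb⟩ := hxJ
    rw [Finset.mem_Icc]
    constructor
    · have h1 : a / h < ((j + 1 : ℤ) : ℝ) := by
        rw [div_lt_iff₀ hh]; push_cast; linarith
      have := Int.floor_lt.2 h1
      omega
    · exact Int.le_floor.2 (by rw [le_div_iff₀ hh]; linarith)
  have hSmem : ∀ {j : ℤ}, j ∈ S ↔ (dyadicInterval k j ∩ J).Nonempty := by
    intro j
    rw [hSdef, Finset.mem_filter]
    exact ⟨fun hj => hj.2, fun hne => ⟨hIccOf j hne, hne⟩⟩
  have hempty : ∀ j ∉ S, dyadicInterval k j ∩ J = ∅ := by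
    intro j hj
    by_contra hne
    exact hj (hSmem.2 (Set.nonempty_iff_ne_empty.2 hne))
  -- covering
  have hcover : J = ⋃ j ∈ S, (dyadicInterval k j ∩ J) := by
    ext x
    simp only [Set.mem_iUnion, Set.mem_inter_iff, exists_prop]
    constructor
    · intro hx
      have hself : x ∈ dyadicInterval k ⌊x / h⌋ := mem_dyadicInterval_iff.2 rfl
      exact ⟨⌊x / h⌋, hSmem.2 ⟨x, hself, hx⟩, hself, hx⟩
    · rintro ⟨j, _, _, hx⟩; exact hx
  have hmeas : ∀ j : ℤ, MeasurableSet (dyadicInterval k j ∩ J) :=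
    fun j => dyadic_meas.inter measurableSet_Ioc
  have hdisjS : (S : Set ℤ).Pairwise (Function.onFun Disjoint fun j => dyadicInterval k j ∩ J) := by
    intro i _ j _ hij
    exact Disjoint.mono Set.inter_subset_left Set.inter_subset_left (dyadic_disj hij)
  have hdisjS' : (S : Set ℤ).Pairwise (Function.onFun Disjoint fun j => dyadicInterval k j) :=
    fun i _ j _ hij => dyadic_disj hij
  -- per-interval integrability / data
  have hwI : ∀ j : ℤ, IntegrableOn w (dyadicInterval k j) volume :=
    fun j => dyadic_integrableOn hw_loc
  have hwiI : ∀ j : ℤ, IntegrableOn (fun x => (w x)⁻¹) (dyadicInterval k j) volume :=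
    fun j => dyadic_integrableOn hwinv_loc
  have havg : ∀ j : ℤ, ∀ x ∈ dyadicInterval k j,
      dyadicAvg w k x = h⁻¹ * ∫ t in dyadicInterval k j, w t := by
    intro j x hx
    unfold dyadicAvg
    rw [mem_dyadicInterval_iff.1 hx]
  have hBnonneg : ∀ j : ℤ, 0 ≤ ∫ t in dyadicInterval k j, (w t)⁻¹ :=
    fun j => setIntegral_nonneg dyadic_meas (fun x _ => (inv_nonneg).2 (hw_pos x).le)
  have hvolIJ : ∀ j : ℤ, volume (dyadicInterval k j ∩ J) < ⊤ :=
    fun j => lt_of_le_of_lt (measure_mono Set.inter_subset_left)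
      (by rw [dyadic_vol]; exact ENNReal.ofReal_lt_top)
  have hpiece_int : ∀ j : ℤ,
      IntegrableOn (fun x => (dyadicAvg w k x)⁻¹) (dyadicInterval k j ∩ J) volume := by
    intro j
    have hconst : IntegrableOn
        (fun _ : ℝ => (h⁻¹ * ∫ t in dyadicInterval k j, w t)⁻¹)
        (dyadicInterval k j ∩ J) volume :=
      integrableOn_const (hvolIJ j).ne
    exact hconst.congr_fun (fun x hx => by rw [havg j x hx.1]) (hmeas j)
  have hpiece_eq : ∀ j : ℤ,
      ∫ x in dyadicInterval k j ∩ J, (dyadicAvg w k x)⁻¹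
        = (volume (dyadicInterval k j ∩ J)).toReal
            * (h⁻¹ * ∫ t in dyadicInterval k j, w t)⁻¹ := by
    intro j
    rw [setIntegral_congr_fun (hmeas j)
      (fun x hx => by
        show (dyadicAvg w k x)⁻¹ = _
        rw [havg j x hx.1] :
        Set.EqOn (fun x => (dyadicAvg w k x)⁻¹)
          (fun _ => (h⁻¹ * ∫ t in dyadicInterval k j, w t)⁻¹) (dyadicInterval k j ∩ J)),
      setIntegral_const, smul_eq_mul, measureReal_def]
  -- summand
  set f : ℤ → ℝ := fun j =>
    ((volume (dyadicInterval k j ∩ J)).toReal / h) * ∫ t in dyadicInterval k j, (w t)⁻¹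
    with hfdef
  have hpiece_le : ∀ j : ℤ,
      ∫ x in dyadicInterval k j ∩ J, (dyadicAvg w k x)⁻¹ ≤ f j := by
    intro j
    rw [hpiece_eq j, hfdef]
    have := inv_avg_le (k := k) (j := j) hw_pos (hwI j) (hwiI j)
    calc (volume (dyadicInterval k j ∩ J)).toReal
          * (h⁻¹ * ∫ t in dyadicInterval k j, w t)⁻¹
        ≤ (volume (dyadicInterval k j ∩ J)).toReal
          * (h⁻¹ * ∫ t in dyadicInterval k j, (w t)⁻¹) :=
          mul_le_mul_of_nonneg_left this ENNReal.toReal_nonneg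
      _ = ((volume (dyadicInterval k j ∩ J)).toReal / h)
          * ∫ t in dyadicInterval k j, (w t)⁻¹ := by ring
  have hsplit : ∫ x in J, (dyadicAvg w k x)⁻¹
      = ∑ j ∈ S, ∫ x in dyadicInterval k j ∩ J, (dyadicAvg w k x)⁻¹ := by
    conv_lhs => rw [hcover]
    exact integral_biUnion_finset S (fun j _ => hmeas j) hdisjS (fun j _ => hpiece_int j)
  have htsum : (∑' j : ℤ, f j) = ∑ j ∈ S, f j := by
    refine tsum_eq_sum (fun j hj => ?_)
    rw [hfdef]
    simp [hempty j hj]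
  have hpart1 : ∫ x in J, (dyadicAvg w k x)⁻¹ ≤ ∑' j : ℤ, f j := by
    rw [htsum, hsplit]
    exact Finset.sum_le_sum (fun j _ => hpiece_le j)
  constructor
  · exact mul_le_mul_of_nonneg_left hpart1 (inv_nonneg.2 hba.le)
  · intro hlt
    -- tsum f ≤ ∫_env w⁻¹
    have hfB : ∀ j ∈ S, f j ≤ ∫ t in dyadicInterval k j, (w t)⁻¹ := by
      intro j _
      rw [hfdef]
      have hv : (volume (dyadicInterval k j ∩ J)).toReal ≤ h := by
        have this : volume (dyadicInterval k j ∩ J) ≤ volume (dyadicInterval k j) :=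
          measure_mono Set.inter_subset_left
        rw [dyadic_vol] at this
        calc (volume (dyadicInterval k j ∩ J)).toReal
            ≤ (ENNReal.ofReal h).toReal := ENNReal.toReal_mono ENNReal.ofReal_ne_top this
          _ = h := ENNReal.toReal_ofReal hh.le
      calc ((volume (dyadicInterval k j ∩ J)).toReal / h)
            * ∫ t in dyadicInterval k j, (w t)⁻¹
          ≤ 1 * ∫ t in dyadicInterval k j, (w t)⁻¹ :=
            mul_le_mul_of_nonneg_right ((div_le_one hh).2 hv) (hBnonneg j)
        _ = ∫ t in dyadicInterval k j, (w t)⁻¹ := one_mul _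
    have hEnvEq : dyadicEnvelope k J = ⋃ j ∈ S, dyadicInterval k j := by
      ext x
      simp only [dyadicEnvelope, Set.mem_iUnion, exists_prop]
      exact ⟨fun ⟨j, hne, hx⟩ => ⟨j, hSmem.2 hne, hx⟩,
        fun ⟨j, hjS, hx⟩ => ⟨j, hSmem.1 hjS, hx⟩⟩
    have hC_eq : ∫ x in dyadicEnvelope k J, (w x)⁻¹
        = ∑ j ∈ S, ∫ t in dyadicInterval k j, (w t)⁻¹ := by
      rw [hEnvEq]
      exact integral_biUnion_finset S (fun j _ => dyadic_meas) hdisjS' (fun j _ => hwiI j)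
    have hCnonneg : 0 ≤ ∫ x in dyadicEnvelope k J, (w x)⁻¹ := by
      rw [hC_eq]
      exact Finset.sum_nonneg (fun j _ => hBnonneg j)
    -- volume of the envelope
    have hEnvVol : (volume (dyadicEnvelope k J)).toReal = (S.card : ℝ) * h := by
      rw [hEnvEq, measure_biUnion_finset hdisjS' (fun j _ => dyadic_meas)]
      rw [Finset.sum_congr rfl (fun j _ => (dyadic_vol (k := k) (j := j)))]
      rw [Finset.sum_const, nsmul_eq_mul, ENNReal.toReal_mul, ENNReal.toReal_ofReal hh.le]
      simp
    set V : ℝ := (volume (dyadicEnvelope k J)).toReal with hVdef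
    have hmn : m ≤ n := Int.floor_le_floor (by gcongr)
    have hcard : (S.card : ℝ) ≤ (n : ℝ) - m + 1 := by
      have h1 : S.card ≤ (Finset.Icc m n).card := Finset.card_filter_le _ _
      rw [Int.card_Icc] at h1
      have h2 : ((n + 1 - m).toNat : ℤ) = n + 1 - m := Int.toNat_of_nonneg (by omega)
      calc (S.card : ℝ) ≤ (((n + 1 - m).toNat : ℤ) : ℝ) := by exact_mod_cast h1
        _ = (n : ℝ) - m + 1 := by rw [h2]; push_cast; ring
    have hVle : V ≤ 3 * (b - a) := by
      have hnle : (n : ℝ) ≤ b / h := Int.floor_le _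
      have hma : a / h < (m : ℝ) + 1 := Int.lt_floor_add_one _
      have hb' : (b / h) * h = b := div_mul_cancel₀ b hh.ne'
      have ha' : (a / h) * h = a := div_mul_cancel₀ a hh.ne'
      have hstep : ((n : ℝ) - m + 1) * h ≤ b - a + 2 * h := by
        nlinarith [mul_le_mul_of_nonneg_right
          (show (n : ℝ) - m + 1 ≤ b / h - a / h + 2 by linarith) hh.le]
      calc V = (S.card : ℝ) * h := hEnvVol
        _ ≤ ((n : ℝ) - m + 1) * h := mul_le_mul_of_nonneg_right hcard hh.le
        _ ≤ b - a + 2 * h := hstep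
        _ ≤ 3 * (b - a) := by linarith
    have hVpos : 0 < V := by
      have hnS : n ∈ S := hSmem.2 ⟨b, mem_dyadicInterval_iff.2 rfl, ⟨hab, le_refl b⟩⟩
      have hcpos : 0 < S.card := Finset.card_pos.2 ⟨n, hnS⟩
      rw [hEnvVol]
      exact mul_pos (by exact_mod_cast hcpos) hh
    have hinv : (b - a)⁻¹ ≤ 3 * V⁻¹ := by
      rw [show (3 : ℝ) * V⁻¹ = 3 / V by ring, le_div_iff₀ hVpos]
      rw [show (b - a)⁻¹ * V = V / (b - a) by ring, div_le_iff₀ hba]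
      linarith
    have hmid : ∑' j : ℤ, f j ≤ ∫ x in dyadicEnvelope k J, (w x)⁻¹ := by
      rw [htsum, hC_eq]
      exact Finset.sum_le_sum hfB
    calc (b - a)⁻¹ * ∫ x in J, (dyadicAvg w k x)⁻¹
        ≤ (b - a)⁻¹ * ∑' j : ℤ, f j :=
          mul_le_mul_of_nonneg_left hpart1 (inv_nonneg.2 hba.le)
      _ ≤ (b - a)⁻¹ * ∫ x in dyadicEnvelope k J, (w x)⁻¹ :=
          mul_le_mul_of_nonneg_left hmid (inv_nonneg.2 hba.le)
      _ ≤ 3 * (V⁻¹ * ∫ x in dyadicEnvelope k J, (w x)⁻¹) := by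
          rw [← mul_assoc]
          exact mul_le_mul_of_nonneg_right hinv hCnonneg
end

section
/- Let w ∈ A_2 on ℝ with constant [w]_{A_2} = sup_J ⟨w⟩_J ⟨w^{-1}⟩_J (supremum over bounded intervals J). For k ∈ ℤ, let w_k = Σ_{I∈𝒫_k} ⟨w⟩_I χ_I be the averaging of w over the dyadic intervals of length 2^{-k}. Then w_k ∈ A_2 and [w_k]_{A_2} ≤ 9[w]_{A_2}. -/
open MeasureTheory

/-- The average of `f` over the bounded interval `(a, b]`. -/
noncomputable def intervalAvg (f : ℝ → ℝ) (a b : ℝ) : ℝ :=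
  (b - a)⁻¹ * ∫ x in Set.Ioc a b, f x

namespace DyA2

lemma delta_pos (k : ℤ) : (0:ℝ) < (2:ℝ)^(-k) := zpow_pos (by norm_num) _

lemma mem_dyadic_iff {k j : ℤ} {x : ℝ} :
    x ∈ dyadicInterval k j ↔ ⌊x / (2:ℝ)^(-k)⌋ = j := by
  have hδ := delta_pos k
  rw [Int.floor_eq_iff, dyadicInterval, Set.mem_Ico]
  constructor
  · rintro ⟨h1, h2⟩
    refine ⟨by rw [le_div_iff₀ hδ]; exact h1, ?_⟩
    rw [div_lt_iff₀ hδ]; push_cast; linarith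
  · rintro ⟨h1, h2⟩
    rw [le_div_iff₀ hδ] at h1
    rw [div_lt_iff₀ hδ] at h2
    push_cast at h2
    exact ⟨h1, by linarith⟩

lemma integrableOn_Ioc {v : ℝ → ℝ} (hv : LocallyIntegrable v volume) (c d : ℝ) :
    IntegrableOn v (Set.Ioc c d) := by
  exact (hv.integrableOn_isCompact isCompact_Icc).mono_set Set.Ioc_subset_Icc_self

lemma integrableOn_dyadic {v : ℝ → ℝ} (hv : LocallyIntegrable v volume) (k j : ℤ) :
    IntegrableOn v (dyadicInterval k j) := by
  exact (hv.integrableOn_isCompact isCompact_Icc).mono_set Set.Ico_subset_Icc_self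

lemma integral_Ioc_pos {v : ℝ → ℝ} (hv_pos : ∀ x, 0 < v x)
    (hv : LocallyIntegrable v volume) {c d : ℝ} (hcd : c < d) :
    0 < ∫ x in Set.Ioc c d, v x := by
  rw [setIntegral_pos_iff_support_of_nonneg_ae
    (Filter.Eventually.of_forall fun x => (hv_pos x).le) (integrableOn_Ioc hv c d)]
  have : Function.support v = Set.univ := by
    ext x; simp [Function.support, (hv_pos x).ne']
  rw [this, Set.univ_inter, Real.volume_Ioc]
  simp [hcd]

lemma intervalAvg_pos {v : ℝ → ℝ} (hv_pos : ∀ x, 0 < v x)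
    (hv : LocallyIntegrable v volume) {c d : ℝ} (hcd : c < d) :
    0 < intervalAvg v c d := by
  unfold intervalAvg
  have h : (0:ℝ) < d - c := by linarith
  exact mul_pos (inv_pos.mpr h) (integral_Ioc_pos hv_pos hv hcd)

lemma integral_dyadic_eq_Ioc {v : ℝ → ℝ} (k j : ℤ) :
    ∫ t in dyadicInterval k j, v t
      = ∫ t in Set.Ioc ((j:ℝ)*(2:ℝ)^(-k)) (((j:ℝ)+1)*(2:ℝ)^(-k)), v t := by
  unfold dyadicInterval
  rw [integral_Ico_eq_integral_Ioo, integral_Ioc_eq_integral_Ioo]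


lemma dyadicAvg_eq (v : ℝ → ℝ) {k j : ℤ} {x : ℝ} (hx : x ∈ dyadicInterval k j) :
    dyadicAvg v k x = ((2:ℝ)^(-k))⁻¹ * ∫ t in dyadicInterval k j, v t := by
  rw [dyadicAvg, mem_dyadic_iff.mp hx]

lemma measurable_dyadicAvg (v : ℝ → ℝ) (k : ℤ) : Measurable (dyadicAvg v k) := by
  unfold dyadicAvg
  exact measurable_const.mul <| (measurable_of_countable
    (fun j => ∫ t in dyadicInterval k j, v t)).comp
    ((measurable_id.div_const _).floor)

lemma dyadicAvg_pos {v : ℝ → ℝ} (hv_pos : ∀ x, 0 < v x)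
    (hv : LocallyIntegrable v volume) (k : ℤ) (x : ℝ) : 0 < dyadicAvg v k x := by
  have hδ := delta_pos k
  rw [dyadicAvg]
  refine mul_pos (inv_pos.mpr hδ) ?_
  rw [integral_dyadic_eq_Ioc]
  refine integral_Ioc_pos hv_pos hv ?_
  nlinarith

lemma integral_dyadicAvg_piece {v : ℝ → ℝ} (hv : LocallyIntegrable v volume) (k j : ℤ) :
    IntegrableOn (dyadicAvg v k) (Set.Ioc ((j:ℝ)*(2:ℝ)^(-k)) (((j:ℝ)+1)*(2:ℝ)^(-k))) volume ∧
    ∫ x in Set.Ioc ((j:ℝ)*(2:ℝ)^(-k)) (((j:ℝ)+1)*(2:ℝ)^(-k)), dyadicAvg v k x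
      = ∫ x in Set.Ioc ((j:ℝ)*(2:ℝ)^(-k)) (((j:ℝ)+1)*(2:ℝ)^(-k)), v x := by
  have hδ := delta_pos k
  set δ := (2:ℝ)^(-k) with hδdef
  set c := δ⁻¹ * ∫ t in dyadicInterval k j, v t with hc
  have hlen : (j:ℝ)*δ < ((j:ℝ)+1)*δ := by nlinarith
  have hres : volume.restrict (Set.Ioc ((j:ℝ)*δ) (((j:ℝ)+1)*δ))
      = volume.restrict (Set.Ioo ((j:ℝ)*δ) (((j:ℝ)+1)*δ)) :=
    (Measure.restrict_congr_set Ioo_ae_eq_Ioc).symm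
  have heq : dyadicAvg v k =ᵐ[volume.restrict (Set.Ioc ((j:ℝ)*δ) (((j:ℝ)+1)*δ))]
      (fun _ => c) := by
    rw [Filter.EventuallyEq, hres, ae_restrict_iff' measurableSet_Ioo]
    refine Filter.Eventually.of_forall fun x hx => ?_
    exact dyadicAvg_eq v ⟨hx.1.le, hx.2⟩
  have hint : IntegrableOn (dyadicAvg v k) (Set.Ioc ((j:ℝ)*δ) (((j:ℝ)+1)*δ)) volume := by
    refine (integrableOn_const ?_).congr heq.symm
    rw [Real.volume_Ioc]; exact ENNReal.ofReal_ne_top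
  refine ⟨hint, ?_⟩
  rw [integral_congr_ae heq]
  rw [setIntegral_const, Real.volume_real_Ioc, max_eq_left (by linarith), hc]
  rw [integral_dyadic_eq_Ioc]
  have h2 : ((j:ℝ)+1)*δ - (j:ℝ)*δ = δ := by ring
  rw [h2, smul_eq_mul, ← mul_assoc, mul_inv_cancel₀ (ne_of_gt hδ), one_mul]


lemma integral_dyadicAvg_Ioc {v : ℝ → ℝ} (hv : LocallyIntegrable v volume) (k m : ℤ) :
    ∀ n : ℤ, m ≤ n →
      IntegrableOn (dyadicAvg v k) (Set.Ioc ((m:ℝ)*(2:ℝ)^(-k)) ((n:ℝ)*(2:ℝ)^(-k))) volume ∧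
      ∫ x in Set.Ioc ((m:ℝ)*(2:ℝ)^(-k)) ((n:ℝ)*(2:ℝ)^(-k)), dyadicAvg v k x
        = ∫ x in Set.Ioc ((m:ℝ)*(2:ℝ)^(-k)) ((n:ℝ)*(2:ℝ)^(-k)), v x := by
  have hδ := delta_pos k
  set δ := (2:ℝ)^(-k) with hδdef
  refine Int.le_induction ?_ ?_
  · simp [Set.Ioc_self]
  · rintro n hmn ⟨ih_int, ih_eq⟩
    have hcast : ((n+1:ℤ):ℝ) = (n:ℝ)+1 := by push_cast; ring
    have h1 : (m:ℝ)*δ ≤ (n:ℝ)*δ := by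
      have : (m:ℝ) ≤ (n:ℝ) := by exact_mod_cast hmn
      nlinarith
    have h2 : (n:ℝ)*δ ≤ ((n:ℝ)+1)*δ := by nlinarith
    have hu : Set.Ioc ((m:ℝ)*δ) (((n:ℝ)+1)*δ)
        = Set.Ioc ((m:ℝ)*δ) ((n:ℝ)*δ) ∪ Set.Ioc ((n:ℝ)*δ) (((n:ℝ)+1)*δ) :=
      (Set.Ioc_union_Ioc_eq_Ioc h1 h2).symm
    obtain ⟨pint, peq⟩ := integral_dyadicAvg_piece hv k n
    rw [hcast, hu]
    constructor
    · exact ih_int.union pint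
    · rw [setIntegral_union (Set.Ioc_disjoint_Ioc_of_le le_rfl) measurableSet_Ioc ih_int pint,
        setIntegral_union (Set.Ioc_disjoint_Ioc_of_le le_rfl) measurableSet_Ioc
          ((integrableOn_Ioc hv _ _)) (integrableOn_Ioc hv _ _), ih_eq, peq]

lemma Ioc_subset_dyadic_Ioc {k : ℤ} {a b : ℝ} :
    Set.Ioc a b ⊆ Set.Ioc ((⌊a/(2:ℝ)^(-k)⌋:ℝ)*(2:ℝ)^(-k))
      (((⌊b/(2:ℝ)^(-k)⌋:ℝ)+1)*(2:ℝ)^(-k)) := by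
  have hδ := delta_pos k
  intro x hx
  constructor
  · calc (⌊a/(2:ℝ)^(-k)⌋:ℝ)*(2:ℝ)^(-k) ≤ (a/(2:ℝ)^(-k))*(2:ℝ)^(-k) := by
          have := Int.floor_le (a/(2:ℝ)^(-k)); nlinarith
    _ = a := by field_simp
    _ < x := hx.1
  · calc x ≤ b := hx.2
    _ = (b/(2:ℝ)^(-k))*(2:ℝ)^(-k) := by field_simp
    _ ≤ ((⌊b/(2:ℝ)^(-k)⌋:ℝ)+1)*(2:ℝ)^(-k) := by
          have := (Int.lt_floor_add_one (b/(2:ℝ)^(-k))).le; nlinarith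

lemma integrableOn_dyadicAvg {v : ℝ → ℝ} (hv : LocallyIntegrable v volume) (k : ℤ)
    (a b : ℝ) : IntegrableOn (dyadicAvg v k) (Set.Ioc a b) volume := by
  have hδ := delta_pos k
  rcases le_or_gt b a with h | h
  · rw [Set.Ioc_eq_empty (not_lt.mpr h)]; exact integrableOn_empty
  · have hmn : ⌊a/(2:ℝ)^(-k)⌋ ≤ ⌊b/(2:ℝ)^(-k)⌋ + 1 := by
      have : ⌊a/(2:ℝ)^(-k)⌋ ≤ ⌊b/(2:ℝ)^(-k)⌋ :=
        Int.floor_le_floor (by gcongr)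
      omega
    have := (integral_dyadicAvg_Ioc hv k ⌊a/(2:ℝ)^(-k)⌋ (⌊b/(2:ℝ)^(-k)⌋+1) hmn).1
    refine this.mono_set ?_
    have hsub := @Ioc_subset_dyadic_Ioc k a b
    intro x hx
    have := hsub hx
    rw [Int.cast_add, Int.cast_one]
    exact this

lemma dyadicAvg_nonneg {v : ℝ → ℝ} (hv_pos : ∀ x, 0 < v x)
    (hv : LocallyIntegrable v volume) (k : ℤ) (x : ℝ) : 0 ≤ dyadicAvg v k x :=
  (dyadicAvg_pos hv_pos hv k x).le


lemma one_le_avg_mul {v : ℝ → ℝ} (hv_pos : ∀ x, 0 < v x)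
    (hv : LocallyIntegrable v volume)
    (hvi : LocallyIntegrable (fun x => (v x)⁻¹) volume)
    {c d : ℝ} (hcd : c < d) :
    1 ≤ intervalAvg v c d * intervalAvg (fun x => (v x)⁻¹) c d := by
  have hd : (0:ℝ) < d - c := by linarith
  set A := intervalAvg v c d with hA
  set B := intervalAvg (fun x => (v x)⁻¹) c d with hB
  have hApos : 0 < A := intervalAvg_pos hv_pos hv hcd
  have hBpos : 0 < B := intervalAvg_pos (fun x => inv_pos.mpr (hv_pos x)) hvi hcd
  set r := Real.sqrt (B/A) with hr
  have hrpos : 0 < r := Real.sqrt_pos.mpr (div_pos hBpos hApos)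
  have hpt : ∀ x ∈ Set.Ioc c d, (2:ℝ) ≤ r * v x + r⁻¹ * (v x)⁻¹ := by
    intro x _
    have hvx := hv_pos x
    have h1 : (r * v x) * (r⁻¹ * (v x)⁻¹) = 1 := by field_simp
    nlinarith [sq_nonneg (r * v x - 1), mul_pos hrpos hvx]
  have hint : IntegrableOn (fun x => r * v x + r⁻¹ * (v x)⁻¹) (Set.Ioc c d) volume :=
    ((integrableOn_Ioc hv c d).const_mul r).add ((integrableOn_Ioc hvi c d).const_mul r⁻¹)
  have hmono := setIntegral_mono_on
    (integrableOn_const (by rw [Real.volume_Ioc]; exact ENNReal.ofReal_ne_top))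
    hint measurableSet_Ioc hpt
  rw [setIntegral_const, Real.volume_real_Ioc, max_eq_left hd.le, smul_eq_mul] at hmono
  rw [integral_add ((integrableOn_Ioc hv c d).const_mul r)
      ((integrableOn_Ioc hvi c d).const_mul r⁻¹),
    integral_const_mul, integral_const_mul] at hmono
  have hIA : ∫ x in Set.Ioc c d, v x = (d - c) * A := by
    rw [hA, intervalAvg]; field_simp
  have hIB : ∫ x in Set.Ioc c d, (v x)⁻¹ = (d - c) * B := by
    rw [hB, intervalAvg]; field_simp
  rw [hIA, hIB] at hmono
  have key : 2 ≤ r * A + r⁻¹ * B := by nlinarith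
  have hrA : r * A = Real.sqrt (A * B) := by
    rw [hr]
    nth_rewrite 2 [show A = Real.sqrt (A^2) from (Real.sqrt_sq hApos.le).symm]
    rw [← Real.sqrt_mul (by positivity)]
    congr 1
    field_simp
  have hrB : r⁻¹ * B = Real.sqrt (A * B) := by
    rw [hr, ← Real.sqrt_inv, inv_div]
    nth_rewrite 2 [show B = Real.sqrt (B^2) from (Real.sqrt_sq hBpos.le).symm]
    rw [← Real.sqrt_mul (by positivity)]
    congr 1
    field_simp
  rw [hrA, hrB] at key
  have hsq := Real.sq_sqrt (mul_nonneg hApos.le hBpos.le)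
  nlinarith [key, hsq]

lemma inv_dyadicAvg_le {w : ℝ → ℝ} (hw_pos : ∀ x, 0 < w x)
    (hw_loc : LocallyIntegrable w volume)
    (hwinv_loc : LocallyIntegrable (fun x => (w x)⁻¹) volume) (k : ℤ) (x : ℝ) :
    (dyadicAvg w k x)⁻¹ ≤ dyadicAvg (fun t => (w t)⁻¹) k x := by
  have hδ := delta_pos k
  set δ := (2:ℝ)^(-k) with hδdef
  set j := ⌊x / δ⌋ with hj
  have hlt : (j:ℝ)*δ < ((j:ℝ)+1)*δ := by nlinarith
  have hmem : x ∈ dyadicInterval k j := mem_dyadic_iff.mpr rfl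
  have hAeq : dyadicAvg w k x = intervalAvg w ((j:ℝ)*δ) (((j:ℝ)+1)*δ) := by
    rw [dyadicAvg_eq w hmem, integral_dyadic_eq_Ioc, intervalAvg]
    congr 1
    rw [show ((j:ℝ)+1)*δ - (j:ℝ)*δ = δ by ring]
  have hBeq : dyadicAvg (fun t => (w t)⁻¹) k x
      = intervalAvg (fun t => (w t)⁻¹) ((j:ℝ)*δ) (((j:ℝ)+1)*δ) := by
    rw [dyadicAvg_eq _ hmem, integral_dyadic_eq_Ioc, intervalAvg]
    congr 1
    rw [show ((j:ℝ)+1)*δ - (j:ℝ)*δ = δ by ring]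
  rw [hAeq, hBeq]
  have h1 := one_le_avg_mul hw_pos hw_loc hwinv_loc hlt
  have hApos : 0 < intervalAvg w ((j:ℝ)*δ) (((j:ℝ)+1)*δ) := intervalAvg_pos hw_pos hw_loc hlt
  have h2 : (intervalAvg w ((j:ℝ)*δ) (((j:ℝ)+1)*δ))⁻¹ * intervalAvg w ((j:ℝ)*δ) (((j:ℝ)+1)*δ) = 1 :=
    inv_mul_cancel₀ hApos.ne'
  nlinarith [inv_pos.mpr hApos]

lemma integral_Ioc_piece_eq (v : ℝ → ℝ) (k j : ℤ) :
    ∫ x in Set.Ioc ((j:ℝ)*(2:ℝ)^(-k)) (((j:ℝ)+1)*(2:ℝ)^(-k)), v x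
      = (2:ℝ)^(-k) * dyadicAvg v k ((j:ℝ)*(2:ℝ)^(-k)) := by
  have hδ := delta_pos k
  have hmem : (j:ℝ)*(2:ℝ)^(-k) ∈ dyadicInterval k j := ⟨le_refl _, by nlinarith⟩
  rw [dyadicAvg_eq v hmem, ← integral_dyadic_eq_Ioc, ← mul_assoc,
    mul_inv_cancel₀ (ne_of_gt hδ), one_mul]

lemma setIntegral_eq_of_eqOn_Ioo {f : ℝ → ℝ} {c d v : ℝ} (hcd : c ≤ d)
    (h : ∀ x ∈ Set.Ioo c d, f x = v) :
    (∫ x in Set.Ioc c d, f x = (d - c) * v)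
      ∧ IntegrableOn f (Set.Ioc c d) volume := by
  have hres : volume.restrict (Set.Ioc c d) = volume.restrict (Set.Ioo c d) :=
    (Measure.restrict_congr_set Ioo_ae_eq_Ioc).symm
  have heq : f =ᵐ[volume.restrict (Set.Ioc c d)] (fun _ => v) := by
    rw [Filter.EventuallyEq, hres, ae_restrict_iff' measurableSet_Ioo]
    exact Filter.Eventually.of_forall h
  constructor
  · rw [integral_congr_ae heq, setIntegral_const, Real.volume_real_Ioc,
      max_eq_left (by linarith), smul_eq_mul]
  · refine (integrableOn_const ?_).congr heq.symm
    rw [Real.volume_Ioc]; exact ENNReal.ofReal_ne_top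


lemma intervalAvg_nonneg {f : ℝ → ℝ} (hf : ∀ x, 0 ≤ f x) (a b : ℝ) :
    0 ≤ intervalAvg f a b := by
  rcases le_or_gt b a with h | h
  · rw [intervalAvg, Set.Ioc_eq_empty (not_lt.mpr h)]
    simp
  · exact mul_nonneg (inv_nonneg.mpr (by linarith)) (setIntegral_nonneg measurableSet_Ioc
      fun x _ => hf x)

end DyA2

set_option maxHeartbeats 1600000 in
open DyA2 in
/-- if `w ∈ A₂` with `[w]_{A₂} ≤ W` (over all bounded intervals), then the
dyadic averaging `w_k` of `w` at scale `2^{-k}` is in `A₂` with `[w_k]_{A₂} ≤ 9W`. -/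
theorem dyadicAvg_A2
    (w : ℝ → ℝ) (hw_pos : ∀ x, 0 < w x) (hw_loc : LocallyIntegrable w volume)
    (hwinv_loc : LocallyIntegrable (fun x => (w x)⁻¹) volume)
    (W : ℝ)
    (hA2 : ∀ a b : ℝ, a < b →
      intervalAvg w a b * intervalAvg (fun x => (w x)⁻¹) a b ≤ W)
    (k : ℤ) :
    ∀ a b : ℝ, a < b →
      intervalAvg (dyadicAvg w k) a b *
        intervalAvg (fun x => (dyadicAvg w k x)⁻¹) a b ≤ 9 * W := by
  intro a b hab
  have hδ := delta_pos k
  set δ := (2:ℝ)^(-k) with hδdef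
  have hba : (0:ℝ) < b - a := by linarith
  set m := ⌊a/δ⌋ with hm
  set n := ⌊b/δ⌋ with hn
  have hma : (m:ℝ)*δ ≤ a := by
    have h := Int.floor_le (a/δ)
    rw [← hm] at h
    calc (m:ℝ)*δ ≤ (a/δ)*δ := by nlinarith
      _ = a := by field_simp
  have ham : a < ((m:ℝ)+1)*δ := by
    have h := Int.lt_floor_add_one (a/δ)
    rw [← hm] at h
    calc a = (a/δ)*δ := by field_simp
      _ < ((m:ℝ)+1)*δ := by nlinarith
  have hnb : (n:ℝ)*δ ≤ b := by
    have h := Int.floor_le (b/δ)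
    rw [← hn] at h
    calc (n:ℝ)*δ ≤ (b/δ)*δ := by nlinarith
      _ = b := by field_simp
  have hbn : b < ((n:ℝ)+1)*δ := by
    have h := Int.lt_floor_add_one (b/δ)
    rw [← hn] at h
    calc b = (b/δ)*δ := by field_simp
      _ < ((n:ℝ)+1)*δ := by nlinarith
  have hmn : m ≤ n := by
    rw [hm, hn]
    exact Int.floor_le_floor (by gcongr)
  have hW1 : 1 ≤ W :=
    le_trans (one_le_avg_mul hw_pos hw_loc hwinv_loc one_pos) (hA2 0 1 one_pos)
  have hptinv : ∀ x, (dyadicAvg w k x)⁻¹ ≤ dyadicAvg (fun t => (w t)⁻¹) k x :=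
    inv_dyadicAvg_le hw_pos hw_loc hwinv_loc k
  have hP2nonneg : 0 ≤ intervalAvg (fun x => (dyadicAvg w k x)⁻¹) a b :=
    intervalAvg_nonneg (fun x => inv_nonneg.mpr (dyadicAvg_nonneg hw_pos hw_loc k x)) a b
  by_cases hcase1 : n = m
  · -- J inside one dyadic interval
    rw [hcase1] at hbn
    have hbmem : b ∈ dyadicInterval k m := ⟨le_trans hma hab.le, hbn⟩
    set c := dyadicAvg w k b with hc
    have hcpos : 0 < c := dyadicAvg_pos hw_pos hw_loc k b
    have hsub : ∀ x ∈ Set.Ioc a b, x ∈ dyadicInterval k m := fun x hx =>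
      ⟨le_trans hma hx.1.le, lt_of_le_of_lt hx.2 hbn⟩
    have hval : ∀ x ∈ Set.Ioc a b, dyadicAvg w k x = c := by
      intro x hx
      rw [dyadicAvg_eq w (hsub x hx), hc, dyadicAvg_eq w hbmem]
    have h1 : intervalAvg (dyadicAvg w k) a b = c := by
      rw [intervalAvg, setIntegral_congr_fun measurableSet_Ioc (fun x hx => hval x hx),
        setIntegral_const, Real.volume_real_Ioc, max_eq_left hba.le, smul_eq_mul,
        ← mul_assoc, inv_mul_cancel₀ hba.ne', one_mul]
    have h2 : intervalAvg (fun x => (dyadicAvg w k x)⁻¹) a b = c⁻¹ := by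
      rw [intervalAvg, setIntegral_congr_fun measurableSet_Ioc
          (fun x (hx : x ∈ Set.Ioc a b) => by rw [hval x hx]),
        setIntegral_const, Real.volume_real_Ioc, max_eq_left hba.le, smul_eq_mul,
        ← mul_assoc, inv_mul_cancel₀ hba.ne', one_mul]
    rw [h1, h2, mul_inv_cancel₀ hcpos.ne']
    nlinarith
  · by_cases hcase2 : n = m + 1
    · -- two dyadic intervals
      have hnr : (n:ℝ) = (m:ℝ) + 1 := by rw [hcase2]; push_cast; ring
      set Am := dyadicAvg w k ((m:ℝ)*δ) with hAm
      set An := dyadicAvg w k ((n:ℝ)*δ) with hAn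
      set Bm := dyadicAvg (fun t => (w t)⁻¹) k ((m:ℝ)*δ) with hBm
      set Bn := dyadicAvg (fun t => (w t)⁻¹) k ((n:ℝ)*δ) with hBn
      have hAmpos : 0 < Am := dyadicAvg_pos hw_pos hw_loc k _
      have hAnpos : 0 < An := dyadicAvg_pos hw_pos hw_loc k _
      have hBmpos : 0 < Bm :=
        dyadicAvg_pos (fun x => inv_pos.mpr (hw_pos x)) hwinv_loc k _
      have hBnpos : 0 < Bn :=
        dyadicAvg_pos (fun x => inv_pos.mpr (hw_pos x)) hwinv_loc k _
      have hanδ : a < (n:ℝ)*δ := by rw [hnr]; exact ham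
      have hmm : ((m:ℝ)*δ) ∈ dyadicInterval k m := ⟨le_refl _, by nlinarith⟩
      have hmn' : ((n:ℝ)*δ) ∈ dyadicInterval k n := ⟨le_refl _, by nlinarith⟩
      have hmemm : ∀ x ∈ Set.Ioo a ((n:ℝ)*δ), x ∈ dyadicInterval k m := by
        intro x hx
        refine ⟨le_trans hma hx.1.le, ?_⟩
        rw [← hnr]
        exact hx.2
      have hmemn : ∀ x ∈ Set.Ioo ((n:ℝ)*δ) b, x ∈ dyadicInterval k n :=
        fun x hx => ⟨hx.1.le, lt_trans hx.2 hbn⟩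
      have hwm : ∀ x ∈ Set.Ioo a ((n:ℝ)*δ), dyadicAvg w k x = Am := by
        intro x hx
        rw [dyadicAvg_eq w (hmemm x hx), hAm, dyadicAvg_eq w hmm]
      have hwn : ∀ x ∈ Set.Ioo ((n:ℝ)*δ) b, dyadicAvg w k x = An := by
        intro x hx
        rw [dyadicAvg_eq w (hmemn x hx), hAn, dyadicAvg_eq w hmn']
      obtain ⟨hIm, hintm⟩ := setIntegral_eq_of_eqOn_Ioo hanδ.le hwm
      obtain ⟨hIn, hintn⟩ := setIntegral_eq_of_eqOn_Ioo hnb hwn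
      obtain ⟨hIm', hintm'⟩ := setIntegral_eq_of_eqOn_Ioo hanδ.le
        (f := fun x => (dyadicAvg w k x)⁻¹) (v := Am⁻¹)
        (fun x hx => by show (dyadicAvg w k x)⁻¹ = Am⁻¹; rw [hwm x hx])
      obtain ⟨hIn', hintn'⟩ := setIntegral_eq_of_eqOn_Ioo hnb
        (f := fun x => (dyadicAvg w k x)⁻¹) (v := An⁻¹)
        (fun x hx => by show (dyadicAvg w k x)⁻¹ = An⁻¹; rw [hwn x hx])
      have hsplit : Set.Ioc a b = Set.Ioc a ((n:ℝ)*δ) ∪ Set.Ioc ((n:ℝ)*δ) b :=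
        (Set.Ioc_union_Ioc_eq_Ioc hanδ.le hnb).symm
      have hl1 : (n:ℝ)*δ - a ≤ b - a := by linarith
      have hl2 : b - (n:ℝ)*δ ≤ b - a := by linarith
      have hl1' : 0 ≤ (n:ℝ)*δ - a := by linarith
      have hl2' : 0 ≤ b - (n:ℝ)*δ := by linarith
      have havg1 : intervalAvg (dyadicAvg w k) a b ≤ Am + An := by
        rw [intervalAvg, hsplit,
          setIntegral_union (Set.Ioc_disjoint_Ioc_of_le le_rfl) measurableSet_Ioc hintm hintn,
          hIm, hIn]
        have t1 : ((n:ℝ)*δ - a)*Am ≤ (b-a)*Am := mul_le_mul_of_nonneg_right hl1 hAmpos.le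
        have t2 : (b - (n:ℝ)*δ)*An ≤ (b-a)*An := mul_le_mul_of_nonneg_right hl2 hAnpos.le
        have hle : ((n:ℝ)*δ - a)*Am + (b - (n:ℝ)*δ)*An ≤ (b-a)*(Am+An) := by
          rw [mul_add]; linarith
        calc (b-a)⁻¹ * (((n:ℝ)*δ - a)*Am + (b - (n:ℝ)*δ)*An)
            ≤ (b-a)⁻¹ * ((b-a)*(Am+An)) :=
              mul_le_mul_of_nonneg_left hle (inv_nonneg.mpr hba.le)
          _ = Am + An := by field_simp
      have hinvm : Am⁻¹ ≤ Bm := hptinv ((m:ℝ)*δ)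
      have hinvn : An⁻¹ ≤ Bn := hptinv ((n:ℝ)*δ)
      have havg2 : intervalAvg (fun x => (dyadicAvg w k x)⁻¹) a b ≤ Bm + Bn := by
        rw [intervalAvg, hsplit,
          setIntegral_union (Set.Ioc_disjoint_Ioc_of_le le_rfl) measurableSet_Ioc hintm' hintn',
          hIm', hIn']
        have him : (0:ℝ) < Am⁻¹ := inv_pos.mpr hAmpos
        have hin : (0:ℝ) < An⁻¹ := inv_pos.mpr hAnpos
        have t1 : ((n:ℝ)*δ - a)*Am⁻¹ ≤ (b-a)*Bm := mul_le_mul hl1 hinvm him.le hba.le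
        have t2 : (b - (n:ℝ)*δ)*An⁻¹ ≤ (b-a)*Bn := mul_le_mul hl2 hinvn hin.le hba.le
        have hle : ((n:ℝ)*δ - a)*Am⁻¹ + (b - (n:ℝ)*δ)*An⁻¹ ≤ (b-a)*(Bm+Bn) := by
          rw [mul_add]; linarith
        calc (b-a)⁻¹ * (((n:ℝ)*δ - a)*Am⁻¹ + (b - (n:ℝ)*δ)*An⁻¹)
            ≤ (b-a)⁻¹ * ((b-a)*(Bm+Bn)) :=
              mul_le_mul_of_nonneg_left hle (inv_nonneg.mpr hba.le)
          _ = Bm + Bn := by field_simp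
      -- the doubled interval
      have hK : (m:ℝ)*δ < ((m:ℝ)+2)*δ := by nlinarith
      have e1 : ∫ x in Set.Ioc ((m:ℝ)*δ) (((m:ℝ)+1)*δ), w x = δ * Am :=
        integral_Ioc_piece_eq w k m
      have e1' : ∫ x in Set.Ioc ((m:ℝ)*δ) (((m:ℝ)+1)*δ), (w x)⁻¹ = δ * Bm :=
        integral_Ioc_piece_eq (fun t => (w t)⁻¹) k m
      have e2 : ∫ x in Set.Ioc (((m:ℝ)+1)*δ) (((m:ℝ)+2)*δ), w x = δ * An := by
        have h := integral_Ioc_piece_eq w k (m+1)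
        have c1 : ((m+1:ℤ):ℝ) = (m:ℝ)+1 := by push_cast; ring
        rw [c1, show ((m:ℝ)+1+1) = (m:ℝ)+2 by ring] at h
        rw [hAn, hnr]
        exact h
      have e2' : ∫ x in Set.Ioc (((m:ℝ)+1)*δ) (((m:ℝ)+2)*δ), (w x)⁻¹ = δ * Bn := by
        have h := integral_Ioc_piece_eq (fun t => (w t)⁻¹) k (m+1)
        have c1 : ((m+1:ℤ):ℝ) = (m:ℝ)+1 := by push_cast; ring
        rw [c1, show ((m:ℝ)+1+1) = (m:ℝ)+2 by ring] at h
        rw [hBn, hnr]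
        exact h
      have hsplitK : Set.Ioc ((m:ℝ)*δ) (((m:ℝ)+2)*δ)
          = Set.Ioc ((m:ℝ)*δ) (((m:ℝ)+1)*δ) ∪ Set.Ioc (((m:ℝ)+1)*δ) (((m:ℝ)+2)*δ) :=
        (Set.Ioc_union_Ioc_eq_Ioc (by rw [add_mul, one_mul]; linarith)
          (by rw [add_mul, add_mul, one_mul]; linarith)).symm
      have hIK : intervalAvg w ((m:ℝ)*δ) (((m:ℝ)+2)*δ) = (Am + An)/2 := by
        rw [intervalAvg, hsplitK,
          setIntegral_union (Set.Ioc_disjoint_Ioc_of_le le_rfl) measurableSet_Ioc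
            (integrableOn_Ioc hw_loc _ _) (integrableOn_Ioc hw_loc _ _), e1, e2,
          show ((m:ℝ)+2)*δ - (m:ℝ)*δ = 2*δ by ring]
        field_simp
      have hIKB : intervalAvg (fun x => (w x)⁻¹) ((m:ℝ)*δ) (((m:ℝ)+2)*δ) = (Bm + Bn)/2 := by
        rw [intervalAvg, hsplitK,
          setIntegral_union (Set.Ioc_disjoint_Ioc_of_le le_rfl) measurableSet_Ioc
            (integrableOn_Ioc hwinv_loc _ _) (integrableOn_Ioc hwinv_loc _ _), e1', e2',
          show ((m:ℝ)+2)*δ - (m:ℝ)*δ = 2*δ by ring]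
        field_simp
      have hKW := hA2 ((m:ℝ)*δ) (((m:ℝ)+2)*δ) hK
      rw [hIK, hIKB] at hKW
      calc intervalAvg (dyadicAvg w k) a b * intervalAvg (fun x => (dyadicAvg w k x)⁻¹) a b
          ≤ (Am + An) * (Bm + Bn) := mul_le_mul havg1 havg2 hP2nonneg (by positivity)
        _ = 4 * ((Am + An)/2 * ((Bm + Bn)/2)) := by ring
        _ ≤ 9 * W := by linarith
    · -- at least three dyadic intervals: n ≥ m + 2
      have hge : m + 2 ≤ n := by omega
      have hmn1 : m ≤ n + 1 := by omega
      have hcast : ((n+1:ℤ):ℝ) = (n:ℝ)+1 := by push_cast; ring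
      obtain ⟨hint', heq'⟩ := integral_dyadicAvg_Ioc hw_loc k m (n+1) hmn1
      obtain ⟨hinti, heqi⟩ := integral_dyadicAvg_Ioc hwinv_loc k m (n+1) hmn1
      rw [hcast] at hint' heq' hinti heqi
      have hsub : Set.Ioc a b ⊆ Set.Ioc ((m:ℝ)*δ) (((n:ℝ)+1)*δ) :=
        fun x hx => ⟨lt_of_le_of_lt hma hx.1, le_trans hx.2 hbn.le⟩
      have hmlt : (m:ℝ)*δ < ((n:ℝ)+1)*δ := by
        have h0 : (m:ℝ) < (n:ℝ)+1 := by
          have : (m:ℝ) ≤ (n:ℝ) := by exact_mod_cast hmn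
          linarith
        exact mul_lt_mul_of_pos_right h0 hδ
      have em : ((m:ℝ)+1)*δ = (m:ℝ)*δ + δ := by ring
      have en : ((n:ℝ)+1)*δ = (n:ℝ)*δ + δ := by ring
      have hlen : ((n:ℝ)+1)*δ - (m:ℝ)*δ ≤ 3*(b-a) := by
        have h3 : δ ≤ b - a := by
          have hc : (m:ℝ)+2 ≤ (n:ℝ) := by exact_mod_cast hge
          have hc2 : ((m:ℝ)+2)*δ ≤ (n:ℝ)*δ := mul_le_mul_of_nonneg_right hc hδ.le
          have e2 : ((m:ℝ)+2)*δ = (m:ℝ)*δ + δ + δ := by ring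
          linarith
        linarith
      set X := intervalAvg w ((m:ℝ)*δ) (((n:ℝ)+1)*δ) with hX
      set Y := intervalAvg (fun x => (w x)⁻¹) ((m:ℝ)*δ) (((n:ℝ)+1)*δ) with hY
      have hXpos : 0 < X := intervalAvg_pos hw_pos hw_loc hmlt
      have hYpos : 0 < Y :=
        intervalAvg_pos (fun x => inv_pos.mpr (hw_pos x)) hwinv_loc hmlt
      have hEpos : 0 < ((n:ℝ)+1)*δ - (m:ℝ)*δ := sub_pos.mpr hmlt
      have hIX : ∫ x in Set.Ioc ((m:ℝ)*δ) (((n:ℝ)+1)*δ), w x = (((n:ℝ)+1)*δ - (m:ℝ)*δ) * X := by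
        rw [hX, intervalAvg, ← mul_assoc, mul_inv_cancel₀ hEpos.ne', one_mul]
      have hIY : ∫ x in Set.Ioc ((m:ℝ)*δ) (((n:ℝ)+1)*δ), (w x)⁻¹
          = (((n:ℝ)+1)*δ - (m:ℝ)*δ) * Y := by
        rw [hY, intervalAvg, ← mul_assoc, mul_inv_cancel₀ hEpos.ne', one_mul]
      have hIb1 : ∫ x in Set.Ioc a b, dyadicAvg w k x
          ≤ ∫ x in Set.Ioc ((m:ℝ)*δ) (((n:ℝ)+1)*δ), dyadicAvg w k x :=
        setIntegral_mono_set hint'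
          (Filter.Eventually.of_forall (fun x => dyadicAvg_nonneg hw_pos hw_loc k x))
          hsub.eventuallyLE
      have hI1 : intervalAvg (dyadicAvg w k) a b ≤ 3 * X := by
        rw [intervalAvg]
        have hle : ∫ x in Set.Ioc a b, dyadicAvg w k x ≤ (((n:ℝ)+1)*δ - (m:ℝ)*δ) * X := by
          rw [← hIX, ← heq']
          exact hIb1
        calc (b-a)⁻¹ * ∫ x in Set.Ioc a b, dyadicAvg w k x
            ≤ (b-a)⁻¹ * ((((n:ℝ)+1)*δ - (m:ℝ)*δ) * X) :=
              mul_le_mul_of_nonneg_left hle (inv_nonneg.mpr hba.le)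
          _ ≤ (b-a)⁻¹ * ((3*(b-a)) * X) :=
              mul_le_mul_of_nonneg_left
                (mul_le_mul_of_nonneg_right hlen hXpos.le) (inv_nonneg.mpr hba.le)
          _ = 3 * X := by field_simp
      have hvk_int : IntegrableOn (dyadicAvg (fun t => (w t)⁻¹) k) (Set.Ioc a b) volume :=
        integrableOn_dyadicAvg hwinv_loc k a b
      have hwki_int : IntegrableOn (fun x => (dyadicAvg w k x)⁻¹) (Set.Ioc a b) volume := by
        refine Integrable.mono hvk_int
          ((measurable_dyadicAvg w k).inv).aestronglyMeasurable ?_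
        refine Filter.Eventually.of_forall fun x => ?_
        rw [Real.norm_eq_abs, Real.norm_eq_abs,
          abs_of_nonneg (inv_nonneg.mpr (dyadicAvg_nonneg hw_pos hw_loc k x)),
          abs_of_nonneg (dyadicAvg_nonneg (fun t => inv_pos.mpr (hw_pos t)) hwinv_loc k x)]
        exact hptinv x
      have hI2 : intervalAvg (fun x => (dyadicAvg w k x)⁻¹) a b ≤ 3 * Y := by
        rw [intervalAvg]
        have step1 : ∫ x in Set.Ioc a b, (dyadicAvg w k x)⁻¹
            ≤ ∫ x in Set.Ioc a b, dyadicAvg (fun t => (w t)⁻¹) k x :=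
          setIntegral_mono_on hwki_int hvk_int measurableSet_Ioc (fun x _ => hptinv x)
        have step2 : ∫ x in Set.Ioc a b, dyadicAvg (fun t => (w t)⁻¹) k x
            ≤ ∫ x in Set.Ioc ((m:ℝ)*δ) (((n:ℝ)+1)*δ), dyadicAvg (fun t => (w t)⁻¹) k x :=
          setIntegral_mono_set hinti
            (Filter.Eventually.of_forall
              (fun x => dyadicAvg_nonneg (fun t => inv_pos.mpr (hw_pos t)) hwinv_loc k x))
            hsub.eventuallyLE
        have hle : ∫ x in Set.Ioc a b, (dyadicAvg w k x)⁻¹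
            ≤ (((n:ℝ)+1)*δ - (m:ℝ)*δ) * Y := by
          rw [← hIY, ← heqi]
          exact le_trans step1 step2
        calc (b-a)⁻¹ * ∫ x in Set.Ioc a b, (dyadicAvg w k x)⁻¹
            ≤ (b-a)⁻¹ * ((((n:ℝ)+1)*δ - (m:ℝ)*δ) * Y) :=
              mul_le_mul_of_nonneg_left hle (inv_nonneg.mpr hba.le)
          _ ≤ (b-a)⁻¹ * ((3*(b-a)) * Y) :=
              mul_le_mul_of_nonneg_left
                (mul_le_mul_of_nonneg_right hlen hYpos.le) (inv_nonneg.mpr hba.le)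
          _ = 3 * Y := by field_simp
      have hXY : X * Y ≤ W := hA2 ((m:ℝ)*δ) (((n:ℝ)+1)*δ) hmlt
      calc intervalAvg (dyadicAvg w k) a b * intervalAvg (fun x => (dyadicAvg w k x)⁻¹) a b
          ≤ (3*X) * (3*Y) := mul_le_mul hI1 hI2 hP2nonneg (by positivity)
        _ = 9 * (X*Y) := by ring
        _ ≤ 9 * W := by linarith
end
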